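/- Under the setup of the series h_i(x) = Σ_{n≥1} λ^n (f̂(τ_{i,n}(x)) − f̂(τ_{i,n}(0))) for i ∈ Σ_d: for any i, j, k ∈ Σ_d, h_i ≡ h_j implies h_{i+k} ≡ h_{j+k}, where + denotes d-adic addition on Σ_d. Consequently G_0 := {i ∈ Σ_d : h_i ≡ h_0} is a closed subgroup of Σ_d. -/

import Mathlib

/-- `i_1 + i_2 d + ⋯ + i_n d^(n-1)` for a digit sequence `i` (digits indexed from 0). -/
def dVal (d : ℕ) (i : ℕ → Fin d) (n : ℕ) : ℕ :=
  ∑ m ∈ Finset.range n, (i m : ℕ) * d ^ m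

/-- Iterated inverse branches `τ_{i,n} = τ_{i_n} ∘ ⋯ ∘ τ_{i_1}`, `τ_j(x) = τ(x+j)`. -/
def tauIt (tau : ℝ → ℝ) (i : ℕ → ℕ) : ℕ → ℝ → ℝ
  | 0 => id
  | n + 1 => fun x => tau (tauIt tau i n x + i n)

/-- `h_i(x) = Σ_{n≥1} λⁿ (f̂(τ_{i,n}(x)) − f̂(τ_{i,n}(0)))`. -/
noncomputable def hFun (tau : ℝ → ℝ) (fhat : ℝ → ℂ) (lam : ℂ) (i : ℕ → ℕ) (x : ℝ) : ℂ :=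
  ∑' n : ℕ, lam ^ (n + 1) *
    (fhat (tauIt tau i (n + 1) x) - fhat (tauIt tau i (n + 1) 0))


lemma dVal_succ (d : ℕ) (i : ℕ → Fin d) (n : ℕ) :
    dVal d i (n+1) = dVal d i n + (i n : ℕ) * d ^ n := Finset.sum_range_succ _ n

lemma dVal_lt (d : ℕ) (hd : 0 < d) (i : ℕ → Fin d) : ∀ n, dVal d i n < d ^ n := by
  intro n
  induction n with
  | zero => simp [dVal]
  | succ n ih =>
    rw [dVal_succ, pow_succ]
    have h1 : (i n : ℕ) ≤ d - 1 := by have := (i n).2; omega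
    have h2 : (i n : ℕ) * d ^ n ≤ (d-1) * d ^ n := Nat.mul_le_mul_right _ h1
    have h3 : 0 < d ^ n := pow_pos hd _
    have h4 : d ^ n + (d-1) * d^n ≤ d ^ n * d := by
      cases' d with d; · omega
      have he : (d+1-1) * (d+1)^n = d * (d+1)^n := by congr 1
      rw [he]; nlinarith [pow_pos (show 0 < d+1 by omega) n]
    omega

lemma dVal_inj (d : ℕ) (hd : 0 < d) {i j : ℕ → Fin d}
    (h : ∀ n, dVal d i n = dVal d j n) : i = j := by
  funext n
  have h1 := h (n+1); have h2 := h n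
  rw [dVal_succ, dVal_succ, h2] at h1
  have h3 : 0 < d ^ n := pow_pos hd _
  have h4 : (i n : ℕ) * d ^ n = (j n : ℕ) * d ^ n := by omega
  exact Fin.ext (Nat.eq_of_mul_eq_mul_right h3 h4)

def iotaD (d : ℕ) (hd : 0 < d) (m : ℕ) : ℕ → Fin d :=
  fun n => ⟨m / d ^ n % d, Nat.mod_lt _ hd⟩

lemma dVal_iotaD (d : ℕ) (hd : 0 < d) (m : ℕ) :
    ∀ n, dVal d (iotaD d hd m) n = m % d ^ n := by
  intro n
  induction n with
  | zero => simp [dVal, Nat.mod_one]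
  | succ n ih =>
    rw [dVal_succ, ih]
    show m % d ^ n + (m / d ^ n % d) * d ^ n = m % d ^ (n+1)
    rw [pow_succ, Nat.mod_mul]; ring

lemma dVal_mod (d : ℕ) (hd : 0 < d) (k : ℕ → Fin d) {j N : ℕ} (hj : j ≤ N) :
    dVal d k N % d ^ j = dVal d k j := by
  have hsplit : dVal d k N = dVal d k j + ∑ m ∈ Finset.Ico j N, (k m : ℕ) * d ^ m := by
    simp only [dVal, Finset.range_eq_Ico]
    exact (Finset.sum_Ico_consecutive _ (Nat.zero_le j) hj).symm
  have hdvd : d ^ j ∣ ∑ m ∈ Finset.Ico j N, (k m : ℕ) * d ^ m := by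
    apply Finset.dvd_sum
    intro m hm
    exact Dvd.dvd.mul_left (pow_dvd_pow d (Finset.mem_Ico.1 hm).1) _
  obtain ⟨t, ht⟩ := hdvd
  rw [hsplit, ht, mul_comm, Nat.add_mul_mod_self_right,
    Nat.mod_eq_of_lt (dVal_lt d hd k j)]

lemma iotaD_dVal (d : ℕ) (hd : 0 < d) (k : ℕ → Fin d) {n N : ℕ} (h : n < N) :
    iotaD d hd (dVal d k N) n = k n := by
  apply Fin.ext
  show dVal d k N / d ^ n % d = (k n : ℕ)
  have h1 : dVal d k N % (d ^ n * d) / d ^ n = dVal d k N / d ^ n % d :=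
    Nat.mod_mul_right_div_self _ _ _
  rw [← h1, ← pow_succ, dVal_mod d hd k h, dVal_succ,
    Nat.add_mul_div_right _ _ (pow_pos hd n),
    Nat.div_eq_of_lt (dVal_lt d hd k n)]
  simp

section Analytic

lemma lower_lip (g : ℝ → ℝ) (hg : Differentiable ℝ g) (c : ℝ)
    (hc : ∀ x, c ≤ |deriv g x|) (u v : ℝ) : c * |u - v| ≤ |g u - g v| := by
  have key : ∀ a b : ℝ, a < b → c * |a - b| ≤ |g a - g b| := by
    intro a b hab
    obtain ⟨ξ, _, hξ⟩ := exists_deriv_eq_slope g hab hg.continuous.continuousOn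
      hg.differentiableOn
    have hba : b - a ≠ 0 := by linarith
    have : g b - g a = deriv g ξ * (b - a) := by
      field_simp at hξ; linarith [hξ]
    have h2 : |g a - g b| = |deriv g ξ| * |a - b| := by
      rw [abs_sub_comm, this, abs_mul, abs_sub_comm a b]
    rw [h2]
    exact mul_le_mul_of_nonneg_right (hc ξ) (abs_nonneg _)
  rcases lt_trichotomy u v with h | h | h
  · exact key u v h
  · simp [h]
  · rw [abs_sub_comm, abs_sub_comm (g u)]; exact key v u h

lemma inv_lip (g τg : ℝ → ℝ) (hg : Differentiable ℝ g) (hinv : ∀ x, g (τg x) = x)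
    (c : ℝ) (hc : 0 < c) (hder : ∀ x, c ≤ |deriv g x|) (a b : ℝ) :
    |τg a - τg b| ≤ c⁻¹ * |a - b| := by
  have := lower_lip g hg c hder (τg a) (τg b)
  rw [hinv, hinv] at this
  rw [le_inv_mul_iff₀ hc]
  linarith

lemma iter_inv (That tau : ℝ → ℝ) (htau1 : ∀ x, That (tau x) = x) :
    ∀ n x, That^[n] (tau^[n] x) = x := by
  intro n
  induction n with
  | zero => simp
  | succ n ih =>
    intro x
    rw [Function.iterate_succ_apply' tau, Function.iterate_succ_apply That, htau1, ih]

lemma tau_add_d (d : ℕ) (That tau : ℝ → ℝ) (hTdeg : ∀ x, That (x + 1) = That x + d)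
    (htau1 : ∀ x, That (tau x) = x) (htau2 : ∀ x, tau (That x) = x) (x : ℝ) :
    tau (x + d) = tau x + 1 := by
  conv_lhs => rw [← htau1 x, ← hTdeg, htau2]

lemma tau_add_mul (d : ℕ) (That tau : ℝ → ℝ) (hTdeg : ∀ x, That (x + 1) = That x + d)
    (htau1 : ∀ x, That (tau x) = x) (htau2 : ∀ x, tau (That x) = x) :
    ∀ (k : ℕ) (x : ℝ), tau (x + d * k) = tau x + k := by
  intro k
  induction k with
  | zero => simp
  | succ k ih =>
    intro x
    push_cast
    rw [show x + (d:ℝ) * ((k:ℝ)+1) = (x + d * k) + d by ring,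
      tau_add_d d That tau hTdeg htau1 htau2, ih x]
    ring

lemma tau_iter_add (d : ℕ) (That tau : ℝ → ℝ) (hTdeg : ∀ x, That (x + 1) = That x + d)
    (htau1 : ∀ x, That (tau x) = x) (htau2 : ∀ x, tau (That x) = x) :
    ∀ (n k : ℕ) (x : ℝ), tau^[n] (x + (d:ℝ)^n * k) = tau^[n] x + k := by
  intro n
  induction n with
  | zero => simp
  | succ n ih =>
    intro k x
    have h1 : x + (d:ℝ)^(n+1) * k = x + (d:ℝ)^n * ((d * k : ℕ) : ℝ) := by push_cast; ring
    rw [Function.iterate_succ_apply' tau, Function.iterate_succ_apply' tau, h1, ih,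
      show ((d * k : ℕ) : ℝ) = (d:ℝ) * k by push_cast; ring]
    exact tau_add_mul d That tau hTdeg htau1 htau2 k _

lemma tau_iter_lip (tau : ℝ → ℝ) (h1 : ∀ a b, |tau a - tau b| ≤ |a - b|)
    (N : ℕ) (I : ℝ) (hI : 0 < I)
    (hNlip : ∀ a b, |tau^[N] a - tau^[N] b| ≤ I⁻¹ * |a - b|) :
    ∀ (n : ℕ) (a b : ℝ), |tau^[n] a - tau^[n] b| ≤ (I⁻¹) ^ (n / N) * |a - b| := by
  have hr : ∀ (r : ℕ) (a b : ℝ), |tau^[r] a - tau^[r] b| ≤ |a - b| := by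
    intro r
    induction r with
    | zero => simp
    | succ r ih =>
      intro a b
      rw [Function.iterate_succ_apply' tau, Function.iterate_succ_apply' tau]
      exact le_trans (h1 _ _) (ih a b)
  have hq : ∀ (q : ℕ) (a b : ℝ), |tau^[N * q] a - tau^[N * q] b| ≤ (I⁻¹) ^ q * |a - b| := by
    intro q
    induction q with
    | zero => simp
    | succ q ih =>
      intro a b
      have : N * (q + 1) = N * q + N := by ring
      rw [this, Function.iterate_add_apply, Function.iterate_add_apply]
      calc |tau^[N*q] (tau^[N] a) - tau^[N*q] (tau^[N] b)|
          ≤ (I⁻¹)^q * |tau^[N] a - tau^[N] b| := ih _ _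
        _ ≤ (I⁻¹)^q * (I⁻¹ * |a - b|) := by
            exact mul_le_mul_of_nonneg_left (hNlip a b) (by positivity)
        _ = (I⁻¹)^(q+1) * |a - b| := by ring
  intro n a b
  have hn : N * (n / N) + n % N = n := Nat.div_add_mod n N
  calc |tau^[n] a - tau^[n] b|
      = |tau^[N * (n/N)] (tau^[n % N] a) - tau^[N * (n/N)] (tau^[n % N] b)| := by
        rw [← Function.iterate_add_apply, ← Function.iterate_add_apply, hn]
    _ ≤ (I⁻¹)^(n/N) * |tau^[n % N] a - tau^[n % N] b| := hq _ _ _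
    _ ≤ (I⁻¹)^(n/N) * |a - b| := mul_le_mul_of_nonneg_left (hr _ _ _) (by positivity)

lemma summable_block (c J : ℝ) (hc : 0 ≤ c) (hJ : 0 ≤ J) (N : ℕ) (hN : 0 < N)
    (h : c ^ N * J < 1) : Summable (fun n : ℕ => c ^ n * J ^ (n / N)) := by
  haveI : NeZero N := ⟨hN.ne'⟩
  have hρ : 0 ≤ c ^ N * J := by positivity
  have hg1 : Summable (fun q : ℕ => (c ^ N * J) ^ q) := summable_geometric_of_lt_one hρ h
  have hg2 : Summable (fun s : Fin N => c ^ (s : ℕ)) := Summable.of_finite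
  have hg3 : 0 ≤ (fun q : ℕ => (c ^ N * J) ^ q) := fun q => by positivity
  have hg4 : 0 ≤ (fun s : Fin N => c ^ (s : ℕ)) := fun s => by positivity
  have hs : Summable (fun p : ℕ × Fin N => (c ^ N * J) ^ p.1 * c ^ (p.2 : ℕ)) :=
    hg1.mul_of_nonneg hg2 hg3 hg4
  have h2 : Summable ((fun n : ℕ => c ^ n * J ^ (n / N)) ∘ (Nat.divModEquiv N).symm) := by
    apply hs.congr
    intro p
    obtain ⟨q, s⟩ := p
    have he : ((Nat.divModEquiv N).symm (q, s) : ℕ) = q * N + (s : ℕ) := rfl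
    show (c ^ N * J) ^ q * c ^ (s:ℕ) = _
    simp only [Function.comp_apply, he]
    have hdiv : (q * N + (s:ℕ)) / N = q := by
      rw [Nat.add_comm, Nat.add_mul_div_right _ _ hN, Nat.div_eq_of_lt s.2, Nat.zero_add]
    rw [hdiv]
    ring
  exact (Equiv.summable_iff (Nat.divModEquiv N).symm).mp h2

lemma tauIt_eq (d : ℕ) (tau : ℝ → ℝ)
    (htadd : ∀ (n k : ℕ) (x : ℝ), tau^[n] (x + (d:ℝ)^n * k) = tau^[n] x + k)
    (i : ℕ → Fin d) : ∀ (n : ℕ) (x : ℝ),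
    tauIt tau (fun m => (i m : ℕ)) n x = tau^[n] (x + (dVal d i n : ℝ)) := by
  intro n
  induction n with
  | zero => intro x; simp [tauIt, dVal]
  | succ n ih =>
    intro x
    show tau (tauIt tau (fun m => (i m : ℕ)) n x + ((i n : ℕ) : ℝ)) = _
    rw [ih, dVal_succ, Function.iterate_succ_apply' tau,
      show (x + ((dVal d i n + (i n : ℕ) * d ^ n : ℕ) : ℝ))
        = (x + (dVal d i n : ℝ)) + (d:ℝ)^n * ((i n : ℕ) : ℝ) by push_cast; ring,
      htadd]

/-- In the transversality setup (`T̂` a lift of a `C¹`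
orientation-preserving expanding circle map of degree `d` fixing `0`, `τ = T̂⁻¹`,
`f̂` the 1-periodic lift of an `α`-Hölder function, `0 < |λ| < λ₀^α`): for all
`i, j, k ∈ Σ_d`, `h_i ≡ h_j` implies `h_{i+k} ≡ h_{j+k}` (`+` the `d`-adic addition);
consequently `G₀ = {i : h_i ≡ h_0}` is a closed subgroup of `Σ_d`. -/
theorem stmt_5 (d : ℕ) (hd : 2 ≤ d)
    (That : ℝ → ℝ) (hTC1 : ContDiff ℝ 1 That) (hT0 : That 0 = 0)
    (hTdeg : ∀ x, That (x + 1) = That x + d)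
    (hTexp : ∀ x, 1 < deriv That x)
    (tau : ℝ → ℝ) (htau1 : ∀ x, That (tau x) = x) (htau2 : ∀ x, tau (That x) = x)
    (α : NNReal) (hα : 0 < α) (hα1 : α ≤ 1)
    (fhat : ℝ → ℂ) (hfper : Function.Periodic fhat 1)
    (C : NNReal) (hfH : HolderWith C α fhat)
    (lam : ℂ) (hlam0 : 0 < ‖lam‖)
    (hlam : ‖lam‖ <
      (⨆ n : ℕ, sInf (Set.range fun x => |deriv (That^[n + 1]) x|) ^ (((n : ℝ) + 1)⁻¹))
        ^ (α : ℝ))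
    (add : (ℕ → Fin d) → (ℕ → Fin d) → (ℕ → Fin d))
    (hadd : ∀ i j n, dVal d (add i j) n ≡ dVal d i n + dVal d j n [MOD d ^ n]) :
    (∀ i j k : ℕ → Fin d,
        hFun tau fhat lam (fun m => (i m : ℕ)) = hFun tau fhat lam (fun m => (j m : ℕ)) →
        hFun tau fhat lam (fun m => ((add i k) m : ℕ)) =
          hFun tau fhat lam (fun m => ((add j k) m : ℕ))) ∧
    (let G0 : Set (ℕ → Fin d) := {i | hFun tau fhat lam (fun m => (i m : ℕ)) =
        hFun tau fhat lam (fun _ => (0 : ℕ))};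
      IsClosed G0 ∧
      (fun _ => (⟨0, by omega⟩ : Fin d)) ∈ G0 ∧
      (∀ i ∈ G0, ∀ j ∈ G0, add i j ∈ G0) ∧
      (∀ i ∈ G0, ∀ j, add i j = (fun _ => (⟨0, by omega⟩ : Fin d)) → j ∈ G0)) := by
  have hd0 : 0 < d := by omega
  have hαr : (0:ℝ) < (α:ℝ) := by exact_mod_cast hα
  -- Step 1: extract N and I
  obtain ⟨N, hN0, I, hIpos, hIder, hkey⟩ :
      ∃ N : ℕ, 0 < N ∧ ∃ I : ℝ, 0 < I ∧ (∀ x, I ≤ |deriv (That^[N]) x|) ∧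
        ‖lam‖ ^ N < I ^ (α:ℝ) := by
    set b : ℕ → ℝ :=
      fun n => sInf (Set.range fun x => |deriv (That^[n + 1]) x|) ^ (((n : ℝ) + 1)⁻¹) with hb
    have hbnn : ∀ n, 0 ≤ b n := by
      intro n
      apply Real.rpow_nonneg
      apply Real.sInf_nonneg
      rintro y ⟨x, rfl⟩
      exact abs_nonneg _
    have hs0 : 0 ≤ ⨆ n, b n := Real.iSup_nonneg hbnn
    have hαne : (α:ℝ) ≠ 0 := ne_of_gt hαr
    have hspos : 0 < ⨆ n, b n := by
      rcases hs0.lt_or_eq with h | h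
      · exact h
      · exfalso
        rw [← h, Real.zero_rpow hαne] at hlam
        exact absurd hlam (not_lt.mpr hlam0.le)
    have h1 : ‖lam‖ ^ ((α:ℝ)⁻¹) < ⨆ n, b n := by
      have h2 := Real.rpow_lt_rpow (norm_nonneg lam) hlam (inv_pos.mpr hαr)
      rwa [← Real.rpow_mul hs0, mul_inv_cancel₀ hαne, Real.rpow_one] at h2
    obtain ⟨n₀, hn₀⟩ := exists_lt_of_lt_ciSup h1
    set S := sInf (Set.range fun x => |deriv (That^[n₀ + 1]) x|) with hS
    have hS0 : 0 ≤ S := by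
      apply Real.sInf_nonneg
      rintro y ⟨x, rfl⟩
      exact abs_nonneg _
    have hlampos : 0 < ‖lam‖ ^ ((α:ℝ)⁻¹) := Real.rpow_pos_of_pos hlam0 _
    have hSpos : 0 < S := by
      rcases hS0.lt_or_eq with h | h
      · exact h
      · exfalso
        have hb0 : b n₀ = 0 := by
          rw [hb]
          simp only [← hS, ← h]
          rw [Real.zero_rpow (by positivity)]
        rw [hb0] at hn₀
        linarith
    refine ⟨n₀ + 1, Nat.succ_pos _, S, hSpos, ?_, ?_⟩
    · intro x
      exact csInf_le ⟨0, by rintro y ⟨z, rfl⟩; exact abs_nonneg _⟩ ⟨x, rfl⟩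
    · have hn1 : ((n₀:ℝ) + 1) ≠ 0 := by positivity
      have h2 := Real.rpow_lt_rpow hlampos.le hn₀
        (show (0:ℝ) < (α:ℝ) * ((n₀:ℝ)+1) by positivity)
      rw [← Real.rpow_mul (norm_nonneg lam), ← Real.rpow_mul hS0] at h2
      have e1 : (α:ℝ)⁻¹ * ((α:ℝ)*((n₀:ℝ)+1)) = ((n₀:ℝ)+1) := by field_simp
      have e2 : ((n₀:ℝ)+1)⁻¹ * ((α:ℝ)*((n₀:ℝ)+1)) = (α:ℝ) := by field_simp
      rw [e1, e2] at h2
      rwa [show ((n₀:ℝ)+1) = ((n₀+1 : ℕ):ℝ) by push_cast; ring, Real.rpow_natCast] at h2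
  -- Step 2: Lipschitz facts
  have hdiff : Differentiable ℝ That := hTC1.differentiable one_ne_zero
  have hder1 : ∀ x, (1:ℝ) ≤ |deriv That x| := fun x => le_trans (hTexp x).le (le_abs_self _)
  have htauLip : ∀ a b : ℝ, |tau a - tau b| ≤ |a - b| := by
    intro a b
    have := inv_lip That tau hdiff htau1 1 one_pos hder1 a b
    rwa [inv_one, one_mul] at this
  have hNlip : ∀ a b : ℝ, |tau^[N] a - tau^[N] b| ≤ I⁻¹ * |a - b| :=
    inv_lip (That^[N]) (tau^[N]) (hdiff.iterate N) (iter_inv That tau htau1 N) I hIpos hIder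
  have hlip := tau_iter_lip tau htauLip N I hIpos hNlip
  -- Step 3: J and summability
  set J : ℝ := I⁻¹ ^ (α:ℝ) with hJdef
  have hJ0 : 0 ≤ J := Real.rpow_nonneg (inv_nonneg.mpr hIpos.le) _
  have hJq : ∀ q : ℕ, ((I⁻¹)^q : ℝ) ^ (α:ℝ) = J ^ q := by
    intro q
    rw [hJdef, ← Real.rpow_natCast (I⁻¹) q, ← Real.rpow_mul (inv_nonneg.mpr hIpos.le), mul_comm,
      Real.rpow_mul (inv_nonneg.mpr hIpos.le), Real.rpow_natCast]
  have hJlt : ‖lam‖ ^ N * J < 1 := by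
    rw [hJdef, Real.inv_rpow hIpos.le, ← div_eq_mul_inv]
    exact (div_lt_one (Real.rpow_pos_of_pos hIpos _)).mpr hkey
  have hsum0 : Summable (fun n : ℕ => ‖lam‖ ^ n * J ^ (n / N)) :=
    summable_block _ _ (norm_nonneg lam) hJ0 N hN0 hJlt
  have hsum1 : Summable (fun n : ℕ => ‖lam‖ ^ (n+1) * J ^ ((n+1) / N)) :=
    (summable_nat_add_iff 1).mpr hsum0
  -- Step 4: term bound
  have hbound : ∀ (n : ℕ) (a b : ℝ),
      ‖lam ^ n * (fhat (tau^[n] a) - fhat (tau^[n] b))‖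
        ≤ ((C:ℝ) * |a - b| ^ (α:ℝ)) * (‖lam‖ ^ n * J ^ (n / N)) := by
    intro n a b
    rw [norm_mul, norm_pow]
    have h1 : ‖fhat (tau^[n] a) - fhat (tau^[n] b)‖
        ≤ (C:ℝ) * |tau^[n] a - tau^[n] b| ^ (α:ℝ) := by
      have h := hfH.dist_le (tau^[n] a) (tau^[n] b)
      rwa [dist_eq_norm, Real.dist_eq] at h
    have h2 : |tau^[n] a - tau^[n] b| ^ (α:ℝ) ≤ J ^ (n/N) * |a - b| ^ (α:ℝ) := by
      rw [← hJq, ← Real.mul_rpow (by positivity) (abs_nonneg _)]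
      exact Real.rpow_le_rpow (abs_nonneg _) (hlip n a b) hαr.le
    calc ‖lam‖ ^ n * ‖fhat (tau^[n] a) - fhat (tau^[n] b)‖
        ≤ ‖lam‖ ^ n * ((C:ℝ) * (J ^ (n/N) * |a - b| ^ (α:ℝ))) := by
          apply mul_le_mul_of_nonneg_left _ (by positivity)
          exact h1.trans (mul_le_mul_of_nonneg_left h2 C.coe_nonneg)
      _ = ((C:ℝ) * |a - b| ^ (α:ℝ)) * (‖lam‖ ^ n * J ^ (n / N)) := by ring
  have hSumm : ∀ (w : ℕ → ℝ) (y : ℝ), Summable (fun n : ℕ =>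
      lam ^ (n+1) * (fhat (tau^[n+1] (y + w n)) - fhat (tau^[n+1] (w n)))) := by
    intro w y
    apply Summable.of_norm_bounded (hsum1.mul_left ((C:ℝ) * |y| ^ (α:ℝ)))
    intro n
    have h := hbound (n+1) (y + w n) (w n)
    simpa using h
  -- Step 5: rewriting hFun
  have htadd := tau_iter_add d That tau hTdeg htau1 htau2
  have hFun_eq : ∀ (i : ℕ → Fin d) (x : ℝ),
      hFun tau fhat lam (fun m => (i m : ℕ)) x
        = ∑' n : ℕ, lam ^ (n+1) * (fhat (tau^[n+1] (x + (dVal d i (n+1) : ℝ)))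
            - fhat (tau^[n+1] ((dVal d i (n+1) : ℝ)))) := by
    intro i x
    unfold hFun
    apply tsum_congr
    intro n
    rw [tauIt_eq d tau htadd i (n+1) x, tauIt_eq d tau htadd i (n+1) 0, zero_add]
  have hper : ∀ (z : ℝ) (t : ℕ), fhat (z + t) = fhat z := by
    intro z t
    induction t with
    | zero => simp
    | succ t ih =>
      have he : z + ((t+1 : ℕ):ℝ) = (z + ((t:ℕ):ℝ)) + 1 := by push_cast; ring
      rw [he, hfper (z + ((t:ℕ):ℝ)), ih]
  have hmod : ∀ (n : ℕ) {a b : ℕ}, a ≡ b [MOD d ^ n] → ∀ y : ℝ,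
      fhat (tau^[n] (y + (a:ℝ))) = fhat (tau^[n] (y + (b:ℝ))) := by
    have key : ∀ (n : ℕ) (a b : ℕ), a ≤ b → a ≡ b [MOD d ^ n] → ∀ y : ℝ,
        fhat (tau^[n] (y + (a:ℝ))) = fhat (tau^[n] (y + (b:ℝ))) := by
      intro n a b hab hm y
      obtain ⟨t, ht⟩ := (Nat.modEq_iff_dvd' hab).mp hm
      have hb : b = a + d ^ n * t := by omega
      rw [hb, show y + ((a + d^n*t : ℕ):ℝ) = (y + (a:ℝ)) + (d:ℝ)^n * (t:ℝ) by push_cast; ring,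
        htadd n t (y + (a:ℝ)), hper]
    intro n a b hm y
    rcases le_total a b with h | h
    · exact key n a b h hm y
    · exact (key n b a h hm.symm y).symm
  have hmod0 : ∀ (n : ℕ) {a b : ℕ}, a ≡ b [MOD d ^ n] →
      fhat (tau^[n] ((a:ℕ):ℝ)) = fhat (tau^[n] ((b:ℕ):ℝ)) := by
    intro n a b h
    have := hmod n h 0
    rwa [zero_add, zero_add] at this
  -- Step 6: the G function
  set G : (ℕ → Fin d) → (ℕ → Fin d) → ℝ → ℂ := fun i k x =>
    ∑' n : ℕ, lam ^ (n+1) *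
      (fhat (tau^[n+1] (x + ((dVal d i (n+1) + dVal d k (n+1) : ℕ) : ℝ)))
        - fhat (tau^[n+1] (((dVal d i (n+1) + dVal d k (n+1) : ℕ) : ℝ)))) with hGdef
  have hG_add : ∀ (i k : ℕ → Fin d) (x : ℝ),
      hFun tau fhat lam (fun m => ((add i k) m : ℕ)) x = G i k x := by
    intro i k x
    rw [hFun_eq]
    apply tsum_congr
    intro n
    have h1 := hadd i k (n+1)
    rw [hmod (n+1) h1 x, hmod0 (n+1) h1]
  have hG_iota : ∀ (i : ℕ → Fin d) (m : ℕ) (x : ℝ),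
      G i (iotaD d hd0 m) x
        = hFun tau fhat lam (fun m' => (i m' : ℕ)) (x + (m:ℝ))
          - hFun tau fhat lam (fun m' => (i m' : ℕ)) (m:ℝ) := by
    intro i m x
    rw [hFun_eq, hFun_eq,
      ← Summable.tsum_sub (hSumm (fun n => ((dVal d i (n+1) : ℕ):ℝ)) (x + (m:ℝ)))
        (hSumm (fun n => ((dVal d i (n+1) : ℕ):ℝ)) ((m:ℝ)))]
    apply tsum_congr
    intro n
    have hu : dVal d (iotaD d hd0 m) (n+1) = m % d ^ (n+1) := dVal_iotaD d hd0 m (n+1)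
    have hcong : dVal d i (n+1) + dVal d (iotaD d hd0 m) (n+1)
        ≡ dVal d i (n+1) + m [MOD d ^ (n+1)] := by
      rw [hu]
      exact Nat.ModEq.add_left _ (Nat.mod_modEq m (d ^ (n+1)))
    rw [hmod (n+1) hcong x, hmod0 (n+1) hcong,
      show x + ((dVal d i (n+1) + m : ℕ):ℝ) = (x + (m:ℝ)) + ((dVal d i (n+1) : ℕ):ℝ)
        by push_cast; ring,
      show ((dVal d i (n+1) + m : ℕ):ℝ) = (m:ℝ) + ((dVal d i (n+1) : ℕ):ℝ) by push_cast; ring]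
    ring
  -- Step 7: continuity
  have htauC : Continuous tau := by
    have hl : LipschitzWith 1 tau := LipschitzWith.of_dist_le_mul (fun a b => by
      rw [Real.dist_eq, Real.dist_eq, NNReal.coe_one, one_mul]; exact htauLip a b)
    exact hl.continuous
  have hfC : Continuous fhat := hfH.continuous hα
  have hdValC : ∀ n : ℕ, Continuous (fun k : ℕ → Fin d => ((dVal d k n : ℕ) : ℝ)) := by
    intro n
    have he : (fun k : ℕ → Fin d => ((dVal d k n : ℕ) : ℝ))
        = fun k => ∑ m ∈ Finset.range n, ((k m : ℕ) : ℝ) * (d:ℝ) ^ m := by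
      funext k; rw [dVal]; push_cast; ring
    rw [he]
    apply continuous_finset_sum
    intro m _
    exact ((continuous_of_discreteTopology :
      Continuous fun v : Fin d => ((v:ℕ):ℝ)).comp (continuous_apply m)).mul continuous_const
  have hGcont : ∀ (i : ℕ → Fin d) (x : ℝ), Continuous (fun k : ℕ → Fin d => G i k x) := by
    intro i x
    apply continuous_tsum
      (u := fun n => ((C:ℝ) * |x| ^ (α:ℝ)) * (‖lam‖ ^ (n+1) * J ^ ((n+1) / N)))
    · intro n
      have hc : Continuous (fun k : ℕ → Fin d =>
          ((dVal d i (n+1) + dVal d k (n+1) : ℕ) : ℝ)) := by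
        have he : (fun k : ℕ → Fin d => ((dVal d i (n+1) + dVal d k (n+1) : ℕ) : ℝ))
            = fun k => ((dVal d i (n+1) : ℕ):ℝ) + ((dVal d k (n+1) : ℕ):ℝ) := by
          funext k; push_cast; ring
        rw [he]
        exact continuous_const.add (hdValC (n+1))
      apply Continuous.mul continuous_const
      exact ((hfC.comp ((htauC.iterate (n+1)).comp (continuous_const.add hc))).sub
        (hfC.comp ((htauC.iterate (n+1)).comp hc)))
    · exact hsum1.mul_left _
    · intro n k
      have h := hbound (n+1) (x + ((dVal d i (n+1) + dVal d k (n+1) : ℕ):ℝ))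
        (((dVal d i (n+1) + dVal d k (n+1) : ℕ):ℝ))
      simpa using h
  have hHcont : ∀ x : ℝ,
      Continuous (fun i : ℕ → Fin d => hFun tau fhat lam (fun m => (i m : ℕ)) x) := by
    intro x
    have he : (fun i : ℕ → Fin d => hFun tau fhat lam (fun m => (i m : ℕ)) x)
        = fun i => ∑' n : ℕ, lam ^ (n+1) *
            (fhat (tau^[n+1] (x + ((dVal d i (n+1) : ℕ):ℝ)))
              - fhat (tau^[n+1] (((dVal d i (n+1) : ℕ):ℝ)))) := by
      funext i; exact hFun_eq i x
    rw [he]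
    apply continuous_tsum
      (u := fun n => ((C:ℝ) * |x| ^ (α:ℝ)) * (‖lam‖ ^ (n+1) * J ^ ((n+1) / N)))
    · intro n
      apply Continuous.mul continuous_const
      exact ((hfC.comp ((htauC.iterate (n+1)).comp (continuous_const.add (hdValC (n+1))))).sub
        (hfC.comp ((htauC.iterate (n+1)).comp (hdValC (n+1)))))
    · exact hsum1.mul_left _
    · intro n i
      have h := hbound (n+1) (x + ((dVal d i (n+1) : ℕ):ℝ)) (((dVal d i (n+1) : ℕ):ℝ))
      simpa using h
  -- Step 8: density
  have hdense : Dense (Set.range (iotaD d hd0)) := by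
    intro k
    apply mem_closure_of_tendsto
      (f := fun Nn : ℕ => iotaD d hd0 (dVal d k Nn)) (b := Filter.atTop)
    · rw [tendsto_pi_nhds]
      intro n
      have hev : ∀ᶠ Nn in Filter.atTop, iotaD d hd0 (dVal d k Nn) n = k n := by
        rw [Filter.eventually_atTop]
        exact ⟨n+1, fun Nn h => iotaD_dVal d hd0 k (by omega)⟩
      exact Filter.Tendsto.congr'
        (by filter_upwards [hev] with Nn h using h.symm) tendsto_const_nhds
    · exact Filter.Eventually.of_forall (fun Nn => ⟨_, rfl⟩)
  -- Step 9: main statement (A)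
  have main : ∀ i j k : ℕ → Fin d,
      hFun tau fhat lam (fun m => (i m : ℕ)) = hFun tau fhat lam (fun m => (j m : ℕ)) →
      hFun tau fhat lam (fun m => ((add i k) m : ℕ))
        = hFun tau fhat lam (fun m => ((add j k) m : ℕ)) := by
    intro i j k hij
    funext x
    rw [hG_add i k x, hG_add j k x]
    have heq : (fun k' : ℕ → Fin d => G i k' x) = (fun k' => G j k' x) := by
      apply Continuous.ext_on hdense (hGcont i x) (hGcont j x)
      rintro _ ⟨m, rfl⟩
      show G i (iotaD d hd0 m) x = G j (iotaD d hd0 m) x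
      rw [hG_iota, hG_iota, hij]
    exact congrFun heq k
  -- Step 10: group structure
  refine ⟨main, ?_, ?_, ?_, ?_⟩
  · -- closed
    have he : {i : ℕ → Fin d | hFun tau fhat lam (fun m => (i m : ℕ))
          = hFun tau fhat lam (fun _ => (0:ℕ))}
        = ⋂ x : ℝ, {i : ℕ → Fin d | hFun tau fhat lam (fun m => (i m : ℕ)) x
          = hFun tau fhat lam (fun _ => (0:ℕ)) x} := by
      ext i
      simp only [Set.mem_setOf_eq, Set.mem_iInter, funext_iff]
    show IsClosed {i : ℕ → Fin d | hFun tau fhat lam (fun m => (i m : ℕ))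
          = hFun tau fhat lam (fun _ => (0:ℕ))}
    rw [he]
    exact isClosed_iInter fun x => isClosed_eq (hHcont x) continuous_const
  · exact rfl
  · intro i hi j hj
    have haddz : add (fun _ => (⟨0, by omega⟩ : Fin d)) j = j := by
      apply dVal_inj d hd0
      intro n
      have h1 := hadd (fun _ => (⟨0, by omega⟩ : Fin d)) j n
      have hzv : dVal d (fun _ => (⟨0, by omega⟩ : Fin d)) n = 0 := by
        simp [dVal]
      rw [hzv, Nat.zero_add] at h1
      have h2 := dVal_lt d hd0 (add (fun _ => (⟨0, by omega⟩ : Fin d)) j) n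
      have h3 := dVal_lt d hd0 j n
      rwa [Nat.ModEq, Nat.mod_eq_of_lt h2, Nat.mod_eq_of_lt h3] at h1
    have h := main i (fun _ => (⟨0, by omega⟩ : Fin d)) j hi
    rw [haddz] at h
    exact h.trans hj
  · intro i hi j hj0
    have h := main i (fun _ => (⟨0, by omega⟩ : Fin d)) j hi
    have haddz : add (fun _ => (⟨0, by omega⟩ : Fin d)) j = j := by
      apply dVal_inj d hd0
      intro n
      have h1 := hadd (fun _ => (⟨0, by omega⟩ : Fin d)) j n
      have hzv : dVal d (fun _ => (⟨0, by omega⟩ : Fin d)) n = 0 := by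
        simp [dVal]
      rw [hzv, Nat.zero_add] at h1
      have h2 := dVal_lt d hd0 (add (fun _ => (⟨0, by omega⟩ : Fin d)) j) n
      have h3 := dVal_lt d hd0 j n
      rwa [Nat.ModEq, Nat.mod_eq_of_lt h2, Nat.mod_eq_of_lt h3] at h1
    rw [haddz, hj0] at h
    exact h.symm
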